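/- (Monomial-matrix lemma from the proof of Corollary 2) Let d be a positive natural number, let Q be a d×d real orthogonal matrix, and let D be a d×d real diagonal matrix whose diagonal entries are pairwise distinct. If QᵀDQ is a diagonal matrix, then Q is a signed permutation matrix: there is a permutation σ of {1,…,d} such that Q i j = 0 whenever j ≠ σ(i), and Q i σ(i) ∈ {1, −1} for every i. -/
import Mathlib


open Matrix

/-- Monomial-matrix lemma (from the proof of Corollary 2): if `Q` is orthogonal, `D`
is diagonal with pairwise distinct diagonal entries, and `QᵀDQ` is diagonal, then `Q`
is a signed permutation matrix. -/
theorem orthogonal_diagonalizing_is_signed_permutation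
    (d : ℕ) (hd : 0 < d)
    (Q : Matrix (Fin d) (Fin d) ℝ) (hQ : Qᵀ * Q = 1) (hQ' : Q * Qᵀ = 1)
    (D : Matrix (Fin d) (Fin d) ℝ) (hD : D.IsDiag)
    (hDdistinct : ∀ i j : Fin d, i ≠ j → D i i ≠ D j j)
    (h : (Qᵀ * D * Q).IsDiag) :
    ∃ σ : Equiv.Perm (Fin d),
      (∀ i j : Fin d, j ≠ σ i → Q i j = 0) ∧
      (∀ i : Fin d, Q i (σ i) = 1 ∨ Q i (σ i) = -1) := by
  set E := Qᵀ * D * Q with hE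
  -- key identity: Q * E = D * Q
  have hQE : Q * E = D * Q := by
    rw [hE, ← mul_assoc, ← mul_assoc, hQ', one_mul]
  -- entrywise: Q i j ≠ 0 → E j j = D i i
  have key : ∀ i j : Fin d, Q i j ≠ 0 → E j j = D i i := by
    intro i j hij
    have h1 : (Q * E) i j = Q i j * E j j := by
      rw [Matrix.mul_apply]
      rw [Finset.sum_eq_single j]
      · intro b _ hb
        rw [h hb, mul_zero]
      · intro hb; exact absurd (Finset.mem_univ j) hb
    have h2 : (D * Q) i j = D i i * Q i j := by
      rw [Matrix.mul_apply]
      rw [Finset.sum_eq_single i]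
      · intro b _ hb
        rw [hD (Ne.symm hb), zero_mul]
      · intro hb; exact absurd (Finset.mem_univ i) hb
    have heq : Q i j * E j j = Q i j * D i i := by
      rw [← h1, hQE, h2]; ring
    exact mul_left_cancel₀ hij heq
  -- each column j has a nonzero entry
  have colnz : ∀ j : Fin d, ∃ i, Q i j ≠ 0 := by
    intro j
    by_contra hc
    push_neg at hc
    have : (Qᵀ * Q) j j = 0 := by
      rw [Matrix.mul_apply]
      apply Finset.sum_eq_zero
      intro i _
      rw [Matrix.transpose_apply, hc i, zero_mul]
    rw [hQ, Matrix.one_apply_eq] at this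
    exact one_ne_zero this
  -- and at most one nonzero entry
  have coluniq : ∀ (j : Fin d) (i i' : Fin d), Q i j ≠ 0 → Q i' j ≠ 0 → i = i' := by
    intro j i i' hi hi'
    by_contra hne
    exact hDdistinct i i' hne ((key i j hi).symm.trans (key i' j hi'))
  choose τ hτ using colnz
  have hchar : ∀ i j : Fin d, Q i j ≠ 0 ↔ i = τ j := by
    intro i j
    constructor
    · intro hij; exact coluniq j i (τ j) hij (hτ j)
    · intro hij; rw [hij]; exact hτ j
  -- τ is injective
  have hinj : Function.Injective τ := by
    intro j j' hjj'
    by_contra hne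
    have : (Qᵀ * Q) j j' = 0 := by rw [hQ, Matrix.one_apply_ne hne]
    rw [Matrix.mul_apply] at this
    rw [Finset.sum_eq_single (τ j)] at this
    · apply hτ j
      rcases mul_eq_zero.mp this with h' | h'
      · exact h'
      · exact absurd h' (by rw [hjj']; exact hτ j')
    · intro b _ hb
      rw [Matrix.transpose_apply]
      rw [(not_iff_not.mpr (hchar b j)).mpr hb |> not_not.mp |> fun x => x]
      ring
    · intro hb; exact absurd (Finset.mem_univ _) hb
  have hbij : Function.Bijective τ := (Finite.injective_iff_bijective).mp hinj
  let e := Equiv.ofBijective τ hbij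
  refine ⟨e.symm, ?_, ?_⟩
  · intro i j hj
    by_contra hq
    have : i = τ j := (hchar i j).mp hq
    apply hj
    rw [this]
    exact (e.symm_apply_apply j).symm
  · intro i
    have hτi : τ (e.symm i) = i := e.apply_symm_apply i
    have hnz : Q i (e.symm i) ≠ 0 := by
      rw [hchar]; exact hτi.symm
    have hsum : (Q * Qᵀ) i i = 1 := by rw [hQ', Matrix.one_apply_eq]
    rw [Matrix.mul_apply] at hsum
    rw [Finset.sum_eq_single (e.symm i)] at hsum
    · rw [Matrix.transpose_apply] at hsum
      exact mul_self_eq_one_iff.mp hsum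
    · intro b _ hb
      have : Q i b = 0 := by
        by_contra hq
        have hb' : i = τ b := (hchar i b).mp hq
        exact hb (by rw [hb']; exact (e.symm_apply_apply b).symm)
      rw [this, zero_mul]
    · intro hb; exact absurd (Finset.mem_univ _) hb
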